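/- Let C := {x ∈ ℝ³ : x₁² + x₂² ≤ x₃², x₁ ≥ 0, x₃ ≥ 0}. For α > 0 and β ∈ ℝ, the linear map given by the matrix L(α,β) = α·[[1,0,0],[0,√(β²+1),β],[0,β,√(β²+1)]] is an automorphism of C, i.e., L(α,β)(C) = C. -/

import Mathlib

/-- The half second-order cone in ℝ³. -/
def halfSOC : Set (Fin 3 → ℝ) :=
  {x | x 0 ^ 2 + x 1 ^ 2 ≤ x 2 ^ 2 ∧ 0 ≤ x 0 ∧ 0 ≤ x 2}

lemma core_aux (β : ℝ) (x : Fin 3 → ℝ) (hx : x ∈ halfSOC) :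
    ![x 0, Real.sqrt (β ^ 2 + 1) * x 1 + β * x 2,
        β * x 1 + Real.sqrt (β ^ 2 + 1) * x 2] ∈ halfSOC := by
  obtain ⟨h1, h2, h3⟩ := hx
  set s := Real.sqrt (β ^ 2 + 1) with hs
  have hs2 : s ^ 2 = β ^ 2 + 1 := Real.sq_sqrt (by positivity)
  have hs0 : 0 ≤ s := Real.sqrt_nonneg _
  have hb : |β| ≤ s := by
    rw [abs_le]; constructor <;> nlinarith
  have hx1 : |x 1| ≤ x 2 := by
    rw [abs_le]; constructor <;> nlinarith
  have key : 0 ≤ β * x 1 + s * x 2 := by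
    nlinarith [neg_abs_le (β * x 1), abs_mul β (x 1),
      mul_le_mul hb hx1 (abs_nonneg _) hs0]
  refine ⟨?_, ?_, ?_⟩ <;>
    simp only [Matrix.cons_val_zero, Matrix.cons_val_one, Matrix.head_cons,
      Matrix.cons_val_two, Matrix.tail_cons]
  · nlinarith
  · exact h2
  · exact key

lemma smul_mem_halfSOC {c : ℝ} (hc : 0 < c) {x : Fin 3 → ℝ} (hx : x ∈ halfSOC) :
    c • x ∈ halfSOC := by
  obtain ⟨h1, h2, h3⟩ := hx
  refine ⟨?_, ?_, ?_⟩ <;> simp only [Pi.smul_apply, smul_eq_mul]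
  · nlinarith [mul_le_mul_of_nonneg_left h1 (sq_nonneg c)]
  · positivity
  · positivity

theorem stmt_10 (α β : ℝ) (hα : 0 < α) :
    (fun x : Fin 3 → ℝ =>
        Matrix.mulVec
          (α • !![1, 0, 0;
                  0, Real.sqrt (β ^ 2 + 1), β;
                  0, β, Real.sqrt (β ^ 2 + 1)]) x) '' halfSOC = halfSOC := by
  set s := Real.sqrt (β ^ 2 + 1) with hsdef
  have hs2 : s ^ 2 = β ^ 2 + 1 := Real.sq_sqrt (by positivity)
  have hneg : Real.sqrt ((-β) ^ 2 + 1) = s := by rw [hsdef]; norm_num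
  have hmv : ∀ x : Fin 3 → ℝ,
      Matrix.mulVec (α • !![1, 0, 0; 0, s, β; 0, β, s]) x
        = α • ![x 0, s * x 1 + β * x 2, β * x 1 + s * x 2] := by
    intro x
    funext i
    fin_cases i <;>
      simp [Matrix.mulVec, dotProduct, Fin.sum_univ_three] <;> ring
  ext y
  constructor
  · rintro ⟨x, hx, rfl⟩
    simp only [hmv]
    exact smul_mem_halfSOC hα (core_aux β x hx)
  · intro hy
    have hz := core_aux (-β) y hy
    rw [hneg] at hz
    refine ⟨α⁻¹ • ![y 0, s * y 1 + -β * y 2, -β * y 1 + s * y 2],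
      smul_mem_halfSOC (by positivity) hz, ?_⟩
    simp only [hmv]
    funext i
    have hα' : α ≠ 0 := ne_of_gt hα
    fin_cases i <;>
      simp only [Pi.smul_apply, smul_eq_mul, Matrix.cons_val_zero, Matrix.cons_val_one,
        Matrix.head_cons, Matrix.cons_val_two, Matrix.tail_cons, Fin.isValue, Fin.zero_eta,
        Fin.mk_one, show (⟨2, by omega⟩ : Fin 3) = 2 from rfl]
    · field_simp
    · field_simp
      linear_combination y 1 * hs2
    · field_simp
      linear_combination y 2 * hs2
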